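/- Let r ≥ 3, d ≥ 3 and let H be an r-uniform supertree with a vertex u. Let j = ⌈d/2⌉ and let P_d^r(e_j,u)H be the hypergraph obtained from the disjoint union of the loose path P_d^r and H by identifying a fixed core (non-joint) vertex of the edge e_j of P_d^r with the vertex u of H. Then φ(P_d^r(e_j,u)H, x) = φ(P_d^r, x)·φ(H−u, x) − x^{r−3}·φ(P_{⌊d/2⌋}^r, x)·φ(P_{⌈d/2⌉−1}^r, x)·Σ_{e ∈ E_u(H)} φ(H − V(e), x), where the sum runs over all edges e of H containing u. -/

import Mathlib

open Classical

noncomputable section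

/-- A finite hypergraph: a finite vertex set together with a finite set of edges,
each edge being a finite set of vertices. -/
structure FinHypergraph (α : Type*) where
  verts : Finset α
  edges : Finset (Finset α)

namespace FinHypergraph

variable {α : Type*}

/-- Every edge of `H` is a subset of the vertex set of `H`. -/
def WellFormed (H : FinHypergraph α) : Prop := ∀ e ∈ H.edges, e ⊆ H.verts

/-- `H` is `r`-uniform: every edge has exactly `r` vertices. -/
def Uniform (H : FinHypergraph α) (r : ℕ) : Prop := ∀ e ∈ H.edges, e.card = r

/-- A set of edges is a matching if its members are pairwise disjoint. -/
def IsMatchingSet (M : Finset (Finset α)) : Prop :=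
  ∀ e ∈ M, ∀ f ∈ M, e ≠ f → Disjoint e f

/-- `m(H,k)`: the number of matchings of `H` consisting of exactly `k` edges. -/
noncomputable def matchCount (H : FinHypergraph α) (k : ℕ) : ℕ :=
  (H.edges.powerset.filter (fun M => M.card = k ∧ IsMatchingSet M)).card

/-- The matching polynomial `φ(H,x) = Σ_k (-1)^k m(H,k) x^(n - r·k)` of an
`r`-uniform hypergraph `H` with `n` vertices, evaluated at a real number `x`. -/
noncomputable def matchPoly (H : FinHypergraph α) (r : ℕ) (x : ℝ) : ℝ :=
  ∑ k ∈ Finset.range (H.verts.card + 1),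
    (-1 : ℝ) ^ k * (H.matchCount k : ℝ) * x ^ (H.verts.card - r * k)

/-- `H − S`: delete the vertices of `S` and all edges meeting `S`. -/
def removeVerts (H : FinHypergraph α) (S : Finset α) : FinHypergraph α :=
  ⟨H.verts \ S, H.edges.filter (fun e => Disjoint e S)⟩

/-- `H` is connected: nonempty vertex set, and any two vertices are linked by a chain of
vertices successively lying in a common edge. -/
def Connected (H : FinHypergraph α) : Prop :=
  H.verts.Nonempty ∧ ∀ u ∈ H.verts, ∀ v ∈ H.verts,
    Relation.ReflTransGen (fun a b => ∃ e ∈ H.edges, a ∈ e ∧ b ∈ e) u v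

/-- `H` has a cycle: an alternating sequence `v_0 e_0 v_1 e_1 … v_{ℓ-1} e_{ℓ-1} v_0`
(with `ℓ ≥ 2`) of distinct vertices and distinct edges such that consecutive vertices lie
in the intermediate edge. -/
def HasCycle (H : FinHypergraph α) : Prop :=
  ∃ (ℓ : ℕ) (v : ℕ → α) (e : ℕ → Finset α), 2 ≤ ℓ ∧
    Set.InjOn v (Set.Iio ℓ) ∧ Set.InjOn e (Set.Iio ℓ) ∧
    ∀ i < ℓ, e i ∈ H.edges ∧ v i ∈ e i ∧ v ((i + 1) % ℓ) ∈ e i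

/-- An `r`-uniform supertree: a connected acyclic `r`-uniform hypergraph. -/
def IsSupertree (H : FinHypergraph α) (r : ℕ) : Prop :=
  H.WellFormed ∧ H.Uniform r ∧ H.Connected ∧ ¬ H.HasCycle

/-- The edges of the `r`-uniform loose path of length `p` along the vertex labelling `w`:
the `i`-th edge consists of the `r` vertices `w (i*(r-1)), …, w ((i+1)*(r-1))`, so that
consecutive edges share exactly one vertex. -/
def loosePathEdges (r p : ℕ) (w : ℕ → α) : Finset (Finset α) :=
  (Finset.range p).image (fun i => (Finset.Icc (i * (r - 1)) ((i + 1) * (r - 1))).image w)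

/-- `P` is an `r`-uniform loose path with `m` edges (`P_m^r`); for `m = 0` it is a single
vertex with no edge. -/
def IsLoosePath (r m : ℕ) (P : FinHypergraph α) : Prop :=
  ∃ w : ℕ → α, Set.InjOn w (Set.Iic (m * (r - 1))) ∧
    P.verts = (Finset.Icc 0 (m * (r - 1))).image w ∧
    P.edges = loosePathEdges r m w

/-- `T'` is obtained from the disjoint union of the loose path `P_d^r` and `H` by
identifying the path vertex with label `c` with the vertex `u` of `H` (all other path
vertices being new). -/
def IsPathIdentify (r d c : ℕ) (H : FinHypergraph α) (u : α) (T' : FinHypergraph α) : Prop :=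
  ∃ w : ℕ → α, Set.InjOn w (Set.Iic (d * (r - 1))) ∧ w c = u ∧
    (∀ t, t ≤ d * (r - 1) → t ≠ c → w t ∉ H.verts) ∧
    T'.verts = H.verts ∪ (Finset.Icc 0 (d * (r - 1))).image w ∧
    T'.edges = H.edges ∪ loosePathEdges r d w

end FinHypergraph

open FinHypergraph
namespace FinHypergraph

variable {α : Type*}

/-- The finset of all matchings of `H`. -/
noncomputable def matchings (H : FinHypergraph α) : Finset (Finset (Finset α)) :=
  H.edges.powerset.filter (fun M => IsMatchingSet M)

lemma mem_matchings {H : FinHypergraph α} {M : Finset (Finset α)} :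
    M ∈ H.matchings ↔ M ⊆ H.edges ∧ IsMatchingSet M := by
  simp [matchings]

lemma isMatchingSet_subset {M M' : Finset (Finset α)} (h : M' ⊆ M)
    (hM : IsMatchingSet M) : IsMatchingSet M' :=
  fun e he f hf hef => hM e (h he) f (h hf) hef

lemma card_bound {H : FinHypergraph α} {r : ℕ} (hwf : H.WellFormed) (hu : H.Uniform r)
    {M : Finset (Finset α)} (hM : M ∈ H.matchings) : r * M.card ≤ H.verts.card := by
  classical
  obtain ⟨hsub, hmatch⟩ := mem_matchings.1 hM
  have hbu : (M.biUnion id).card = ∑ e ∈ M, e.card :=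
    Finset.card_biUnion (fun e he f hf hef => hmatch e he f hf hef)
  have h1 : ∑ e ∈ M, e.card = r * M.card := by
    rw [Finset.sum_congr rfl (fun e he => hu e (hsub he)), Finset.sum_const, smul_eq_mul,
      mul_comm]
  have h2 : M.biUnion id ⊆ H.verts := by
    intro v hv
    simp only [Finset.mem_biUnion, id] at hv
    obtain ⟨e, he, hve⟩ := hv
    exact hwf e (hsub he) hve
  calc r * M.card = (M.biUnion id).card := by rw [hbu, h1]
    _ ≤ H.verts.card := Finset.card_le_card h2

lemma matchCount_eq {H : FinHypergraph α} (k : ℕ) :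
    H.matchCount k = (H.matchings.filter (fun M => M.card = k)).card := by
  classical
  rw [matchCount, matchings, Finset.filter_filter]
  congr 1
  exact Finset.filter_congr (fun M _ => by tauto)

lemma matchPoly_eq_sum {H : FinHypergraph α} {r : ℕ} (hr : 1 ≤ r)
    (hwf : H.WellFormed) (hu : H.Uniform r) (x : ℝ) :
    H.matchPoly r x
      = ∑ M ∈ H.matchings, (-1 : ℝ) ^ M.card * x ^ (H.verts.card - r * M.card) := by
  classical
  rw [matchPoly,
    ← Finset.sum_fiberwise_of_maps_to (g := Finset.card)
      (t := Finset.range (H.verts.card + 1))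
      (fun M hM => by
        have h1 := card_bound hwf hu hM
        have h2 : M.card ≤ r * M.card := Nat.le_mul_of_pos_left _ (by omega)
        simp only [Finset.mem_range]; omega)]
  apply Finset.sum_congr rfl
  intro k _
  have hcongr : ∀ M ∈ H.matchings.filter (fun M => M.card = k),
      (-1:ℝ)^M.card * x^(H.verts.card - r*M.card) = (-1:ℝ)^k * x^(H.verts.card - r*k) := by
    intro M hM
    rw [(Finset.mem_filter.1 hM).2]
  rw [Finset.sum_congr rfl hcongr, Finset.sum_const, nsmul_eq_mul, matchCount_eq]
  ring

lemma matchings_removeVerts (H : FinHypergraph α) (S : Finset α) :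
    (H.removeVerts S).matchings
      = H.matchings.filter (fun M => ∀ e ∈ M, Disjoint e S) := by
  classical
  ext M
  simp only [mem_matchings, removeVerts, Finset.mem_filter]
  constructor
  · intro ⟨hsub, hm⟩
    refine ⟨⟨fun e he => (Finset.mem_filter.1 (hsub he)).1, hm⟩,
      fun e he => (Finset.mem_filter.1 (hsub he)).2⟩
  · intro ⟨⟨hsub, hm⟩, hd⟩
    exact ⟨fun e he => Finset.mem_filter.2 ⟨hsub he, hd e he⟩, hm⟩

lemma removeVerts_wellFormed {H : FinHypergraph α} (h : H.WellFormed) (S : Finset α) :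
    (H.removeVerts S).WellFormed := by
  classical
  intro e he
  simp only [removeVerts, Finset.mem_filter] at he
  intro v hv
  simp only [removeVerts, Finset.mem_sdiff]
  exact ⟨h e he.1 hv, fun hvS => (Finset.disjoint_left.1 he.2 hv) hvS⟩

lemma removeVerts_uniform {H : FinHypergraph α} {r : ℕ} (h : H.Uniform r) (S : Finset α) :
    (H.removeVerts S).Uniform r := by
  classical
  exact fun e he => h e (Finset.mem_filter.1 he).1

lemma removeVerts_card {H : FinHypergraph α} {S : Finset α} (h : S ⊆ H.verts) :
    (H.removeVerts S).verts.card = H.verts.card - S.card := Finset.card_sdiff_of_subset h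

lemma sum_factor {r n1 n2 : ℕ} (x : ℝ) (S1 S2 : Finset (Finset (Finset α)))
    (b1 : ∀ M ∈ S1, r * M.card ≤ n1) (b2 : ∀ M ∈ S2, r * M.card ≤ n2) :
    ∑ p ∈ S1 ×ˢ S2,
        ((-1 : ℝ) ^ (p.1.card + p.2.card) * x ^ (n1 + n2 - r * (p.1.card + p.2.card)))
      = (∑ M ∈ S1, (-1:ℝ)^M.card * x^(n1 - r*M.card))
          * (∑ M ∈ S2, (-1:ℝ)^M.card * x^(n2 - r*M.card)) := by
  rw [Finset.sum_product, Finset.sum_mul_sum]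
  apply Finset.sum_congr rfl
  intro M1 h1
  apply Finset.sum_congr rfl
  intro M2 h2
  have e1 := b1 M1 h1
  have e2 := b2 M2 h2
  rw [show n1 + n2 - r * (M1.card + M2.card)
      = (n1 - r * M1.card) + (n2 - r * M2.card) by
    have : r * (M1.card + M2.card) = r * M1.card + r * M2.card := by ring
    omega, pow_add, pow_add]
  ring

lemma sum_matchings_union {T G1 G2 : FinHypergraph α}
    (hE : ∀ e, ¬(e ∈ G1.edges ∧ e ∈ G2.edges))
    (he : T.edges = G1.edges ∪ G2.edges)
    (f : Finset (Finset α) → ℝ) :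
    ∑ M ∈ T.matchings, f M
      = ∑ p ∈ (G1.matchings ×ˢ G2.matchings).filter
            (fun p => ∀ e1 ∈ p.1, ∀ e2 ∈ p.2, Disjoint e1 e2),
          f (p.1 ∪ p.2) := by
  classical
  apply Finset.sum_nbij' (i := fun M => (M ∩ G1.edges, M ∩ G2.edges))
    (j := fun p => p.1 ∪ p.2)
  · -- hi
    intro M hM
    obtain ⟨hsub, hm⟩ := mem_matchings.1 hM
    refine Finset.mem_filter.2 ⟨Finset.mem_product.2 ⟨?_, ?_⟩, ?_⟩
    · exact mem_matchings.2 ⟨Finset.inter_subset_right,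
        isMatchingSet_subset Finset.inter_subset_left hm⟩
    · exact mem_matchings.2 ⟨Finset.inter_subset_right,
        isMatchingSet_subset Finset.inter_subset_left hm⟩
    · intro e1 he1 e2 he2
      simp only [Finset.mem_inter] at he1 he2
      have hne : e1 ≠ e2 := by
        rintro rfl
        exact hE e1 ⟨he1.2, he2.2⟩
      exact hm e1 he1.1 e2 he2.1 hne
  · -- hj
    intro p hp
    obtain ⟨hprod, hcross⟩ := Finset.mem_filter.1 hp
    obtain ⟨h1, h2⟩ := Finset.mem_product.1 hprod
    obtain ⟨hs1, hm1⟩ := mem_matchings.1 h1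
    obtain ⟨hs2, hm2⟩ := mem_matchings.1 h2
    refine mem_matchings.2 ⟨?_, ?_⟩
    · rw [he]
      exact Finset.union_subset (hs1.trans Finset.subset_union_left)
        (hs2.trans Finset.subset_union_right)
    · intro e heu f hfu hef
      rcases Finset.mem_union.1 heu with he' | he' <;>
        rcases Finset.mem_union.1 hfu with hf' | hf'
      · exact hm1 e he' f hf' hef
      · exact hcross e he' f hf'
      · exact (hcross f hf' e he').symm
      · exact hm2 e he' f hf' hef
  · -- left inverse
    intro M hM
    obtain ⟨hsub, _⟩ := mem_matchings.1 hM
    simp only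
    rw [← Finset.inter_union_distrib_left, ← he]
    exact Finset.inter_eq_left.2 hsub
  · -- right inverse
    intro p hp
    obtain ⟨hprod, _⟩ := Finset.mem_filter.1 hp
    obtain ⟨h1, h2⟩ := Finset.mem_product.1 hprod
    obtain ⟨hs1, _⟩ := mem_matchings.1 h1
    obtain ⟨hs2, _⟩ := mem_matchings.1 h2
    have e1 : (p.1 ∪ p.2) ∩ G1.edges = p.1 := by
      apply Finset.Subset.antisymm
      · intro e heu
        obtain ⟨heu', he1⟩ := Finset.mem_inter.1 heu
        rcases Finset.mem_union.1 heu' with h | h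
        · exact h
        · exact absurd ⟨he1, hs2 h⟩ (hE e)
      · exact Finset.subset_inter Finset.subset_union_left hs1
    have e2 : (p.1 ∪ p.2) ∩ G2.edges = p.2 := by
      apply Finset.Subset.antisymm
      · intro e heu
        obtain ⟨heu', he2⟩ := Finset.mem_inter.1 heu
        rcases Finset.mem_union.1 heu' with h | h
        · exact absurd ⟨hs1 h, he2⟩ (hE e)
        · exact h
      · exact Finset.subset_inter Finset.subset_union_right hs2
    exact Prod.ext e1 e2
  · -- h
    intro M hM
    obtain ⟨hsub, _⟩ := mem_matchings.1 hM
    simp only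
    rw [← Finset.inter_union_distrib_left, ← he, Finset.inter_eq_left.2 hsub]

end FinHypergraph
namespace FinHypergraph

variable {α : Type*}

lemma sum_pairs_eq {r nT n1 n2 : ℕ} (x : ℝ) (S1 S2 : Finset (Finset (Finset α)))
    (hn : nT = n1 + n2)
    (b1 : ∀ M ∈ S1, r * M.card ≤ n1) (b2 : ∀ M ∈ S2, r * M.card ≤ n2)
    (hd : ∀ p ∈ S1 ×ˢ S2, Disjoint p.1 p.2) :
    ∑ p ∈ S1 ×ˢ S2, ((-1:ℝ)^((p.1 ∪ p.2).card) * x^(nT - r*(p.1 ∪ p.2).card))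
      = (∑ M ∈ S1, (-1:ℝ)^M.card * x^(n1 - r*M.card))
          * (∑ M ∈ S2, (-1:ℝ)^M.card * x^(n2 - r*M.card)) := by
  classical
  rw [← sum_factor x S1 S2 b1 b2]
  apply Finset.sum_congr rfl
  intro p hp
  rw [Finset.card_union_of_disjoint (hd p hp), hn]

lemma edges_nonempty_disjoint {G1 G2 : FinHypergraph α} {r : ℕ} (hr : 1 ≤ r)
    (wf1 : G1.WellFormed) (un1 : G1.Uniform r) (wf2 : G2.WellFormed) (un2 : G2.Uniform r)
    (hsep : ∀ v, v ∈ G1.verts → v ∈ G2.verts → False) :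
    ∀ e, ¬(e ∈ G1.edges ∧ e ∈ G2.edges) := by
  rintro e ⟨h1, h2⟩
  have hcard := un1 e h1
  have hne : e.Nonempty := Finset.card_pos.1 (by omega)
  obtain ⟨v, hv⟩ := hne
  exact hsep v (wf1 e h1 hv) (wf2 e h2 hv)

lemma matchPoly_disjUnion {T G1 G2 : FinHypergraph α} {r : ℕ} (hr : 1 ≤ r)
    (wf1 : G1.WellFormed) (un1 : G1.Uniform r) (wf2 : G2.WellFormed) (un2 : G2.Uniform r)
    (hdv : Disjoint G1.verts G2.verts)
    (hv : T.verts = G1.verts ∪ G2.verts) (he : T.edges = G1.edges ∪ G2.edges) (x : ℝ) :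
    T.matchPoly r x = G1.matchPoly r x * G2.matchPoly r x := by
  classical
  have hE : ∀ e, ¬(e ∈ G1.edges ∧ e ∈ G2.edges) :=
    edges_nonempty_disjoint hr wf1 un1 wf2 un2
      (fun v h1 h2 => Finset.disjoint_left.1 hdv h1 h2)
  have wfT : T.WellFormed := by
    intro e heT
    rw [he] at heT
    rw [hv]
    rcases Finset.mem_union.1 heT with h | h
    · exact (wf1 e h).trans Finset.subset_union_left
    · exact (wf2 e h).trans Finset.subset_union_right
  have unT : T.Uniform r := by
    intro e heT
    rw [he] at heT
    rcases Finset.mem_union.1 heT with h | h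
    · exact un1 e h
    · exact un2 e h
  rw [matchPoly_eq_sum hr wfT unT x, matchPoly_eq_sum hr wf1 un1 x,
    matchPoly_eq_sum hr wf2 un2 x, sum_matchings_union hE he]
  have hfilter : (G1.matchings ×ˢ G2.matchings).filter
      (fun p => ∀ e1 ∈ p.1, ∀ e2 ∈ p.2, Disjoint e1 e2)
      = G1.matchings ×ˢ G2.matchings := by
    apply Finset.filter_true_of_mem
    intro p hp e1 he1 e2 he2
    obtain ⟨h1, h2⟩ := Finset.mem_product.1 hp
    obtain ⟨hs1, _⟩ := mem_matchings.1 h1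
    obtain ⟨hs2, _⟩ := mem_matchings.1 h2
    exact Finset.disjoint_of_subset_left (wf1 e1 (hs1 he1))
      (Finset.disjoint_of_subset_right (wf2 e2 (hs2 he2)) hdv)
  rw [hfilter]
  apply sum_pairs_eq x _ _ ?_ (fun M hM => card_bound wf1 un1 hM)
    (fun M hM => card_bound wf2 un2 hM)
  · intro p hp
    obtain ⟨h1, h2⟩ := Finset.mem_product.1 hp
    obtain ⟨hs1, _⟩ := mem_matchings.1 h1
    obtain ⟨hs2, _⟩ := mem_matchings.1 h2
    rw [Finset.disjoint_left]
    intro e he1 he2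
    exact hE e ⟨hs1 he1, hs2 he2⟩
  · rw [hv, Finset.card_union_of_disjoint hdv]

lemma matchPoly_edgeless (V : Finset α) (r : ℕ) (x : ℝ) :
    (⟨V, ∅⟩ : FinHypergraph α).matchPoly r x = x ^ V.card := by
  classical
  have hmc : ∀ k, (⟨V, ∅⟩ : FinHypergraph α).matchCount k = if k = 0 then 1 else 0 := by
    intro k
    rw [matchCount]
    rcases Nat.eq_zero_or_pos k with rfl | hk
    · rw [if_pos rfl]
      simp only [Finset.powerset_empty]
      rw [Finset.filter_true_of_mem, Finset.card_singleton]
      intro M hM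
      simp only [Finset.mem_singleton] at hM
      subst hM
      exact ⟨Finset.card_empty, fun e he => absurd he (Finset.notMem_empty e)⟩
    · rw [if_neg (by omega)]
      rw [Finset.card_eq_zero, Finset.filter_eq_empty_iff]
      intro M hM
      simp only [Finset.powerset_empty, Finset.mem_singleton] at hM
      subst hM
      simp only [Finset.card_empty]
      rintro ⟨h, -⟩
      omega
  rw [matchPoly]
  rw [Finset.sum_eq_single 0]
  · simp [hmc]
  · intro k _ hk
    simp [hmc, hk]
  · intro h
    simp at h

lemma matchPoly_one_shared {T G1 G2 : FinHypergraph α} {r : ℕ} {u : α} (hr : 2 ≤ r)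
    (wf1 : G1.WellFormed) (un1 : G1.Uniform r) (wf2 : G2.WellFormed) (un2 : G2.Uniform r)
    (hu1 : u ∈ G1.verts) (hu2 : u ∈ G2.verts)
    (hsep : G1.verts ∩ G2.verts ⊆ {u})
    (hv : T.verts = G1.verts ∪ G2.verts) (he : T.edges = G1.edges ∪ G2.edges) (x : ℝ) :
    T.matchPoly r x
      = G1.matchPoly r x * (G2.removeVerts {u}).matchPoly r x
        + (G1.removeVerts {u}).matchPoly r x * G2.matchPoly r x
        - x * ((G1.removeVerts {u}).matchPoly r x * (G2.removeVerts {u}).matchPoly r x) := by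
  classical
  have hr1 : 1 ≤ r := by omega
  have hE : ∀ e, ¬(e ∈ G1.edges ∧ e ∈ G2.edges) := by
    rintro e ⟨h1, h2⟩
    have hcard := un1 e h1
    have hsub : e ⊆ {u} := by
      intro v hv'
      exact hsep (Finset.mem_inter.2 ⟨wf1 e h1 hv', wf2 e h2 hv'⟩)
    have := Finset.card_le_card hsub
    simp only [Finset.card_singleton] at this
    omega
  have wfT : T.WellFormed := by
    intro e heT
    rw [he] at heT
    rw [hv]
    rcases Finset.mem_union.1 heT with h | h
    · exact (wf1 e h).trans Finset.subset_union_left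
    · exact (wf2 e h).trans Finset.subset_union_right
  have unT : T.Uniform r := by
    intro e heT
    rw [he] at heT
    rcases Finset.mem_union.1 heT with h | h
    · exact un1 e h
    · exact un2 e h
  have hinter : G1.verts ∩ G2.verts = {u} :=
    Finset.Subset.antisymm hsep
      (Finset.singleton_subset_iff.2 (Finset.mem_inter.2 ⟨hu1, hu2⟩))
  set n1 := G1.verts.card with hn1
  set n2 := G2.verts.card with hn2
  have hn1pos : 1 ≤ n1 := Finset.card_pos.2 ⟨u, hu1⟩
  have hn2pos : 1 ≤ n2 := Finset.card_pos.2 ⟨u, hu2⟩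
  have hnT : T.verts.card = n1 + n2 - 1 := by
    have := Finset.card_union_add_card_inter G1.verts G2.verts
    rw [hinter, Finset.card_singleton] at this
    rw [hv]
    omega
  have hcard1 : (G1.removeVerts {u}).verts.card = n1 - 1 := by
    rw [removeVerts_card (Finset.singleton_subset_iff.2 hu1), Finset.card_singleton]
  have hcard2 : (G2.removeVerts {u}).verts.card = n2 - 1 := by
    rw [removeVerts_card (Finset.singleton_subset_iff.2 hu2), Finset.card_singleton]
  have wf1' := removeVerts_wellFormed wf1 ({u} : Finset α)
  have un1' := removeVerts_uniform un1 ({u} : Finset α)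
  have wf2' := removeVerts_wellFormed wf2 ({u} : Finset α)
  have un2' := removeVerts_uniform un2 ({u} : Finset α)
  have b1 : ∀ M ∈ G1.matchings, r * M.card ≤ n1 := fun M hM => card_bound wf1 un1 hM
  have b2 : ∀ M ∈ G2.matchings, r * M.card ≤ n2 := fun M hM => card_bound wf2 un2 hM
  have b1' : ∀ M ∈ (G1.removeVerts {u}).matchings, r * M.card ≤ n1 - 1 := fun M hM => by
    have := card_bound wf1' un1' hM
    rwa [hcard1] at this
  have b2' : ∀ M ∈ (G2.removeVerts {u}).matchings, r * M.card ≤ n2 - 1 := fun M hM => by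
    have := card_bound wf2' un2' hM
    rwa [hcard2] at this
  -- disjointness of matching pairs (edge finsets)
  have hdis : ∀ (p : Finset (Finset α) × Finset (Finset α)),
      p.1 ⊆ G1.edges → p.2 ⊆ G2.edges → Disjoint p.1 p.2 := by
    intro p hs1 hs2
    rw [Finset.disjoint_left]
    intro e he1 he2
    exact hE e ⟨hs1 he1, hs2 he2⟩
  rw [matchPoly_eq_sum hr1 wfT unT x, matchPoly_eq_sum hr1 wf1 un1 x,
    matchPoly_eq_sum hr1 wf2 un2 x, matchPoly_eq_sum hr1 wf1' un1' x,
    matchPoly_eq_sum hr1 wf2' un2' x, sum_matchings_union hE he]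
  -- rewrite the filter condition as a disjunction
  have hPiff : ∀ p ∈ G1.matchings ×ˢ G2.matchings,
      ((∀ e1 ∈ p.1, ∀ e2 ∈ p.2, Disjoint e1 e2)
        ↔ ((∀ e ∈ p.1, Disjoint e ({u} : Finset α)) ∨
            (∀ e ∈ p.2, Disjoint e ({u} : Finset α)))) := by
    intro p hp
    obtain ⟨h1, h2⟩ := Finset.mem_product.1 hp
    obtain ⟨hs1, _⟩ := mem_matchings.1 h1
    obtain ⟨hs2, _⟩ := mem_matchings.1 h2
    constructor
    · intro hall
      by_contra hcon
      push_neg at hcon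
      obtain ⟨⟨e1, he1, hd1⟩, ⟨e2, he2, hd2⟩⟩ := hcon
      rw [Finset.disjoint_singleton_right, not_not] at hd1 hd2
      exact Finset.disjoint_left.1 (hall e1 he1 e2 he2) hd1 hd2
    · intro hor e1 he1 e2 he2
      rw [Finset.disjoint_left]
      intro v hv1 hv2
      have hv' : v ∈ ({u} : Finset α) := by
        rw [← hinter]
        exact Finset.mem_inter.2 ⟨wf1 e1 (hs1 he1) hv1, wf2 e2 (hs2 he2) hv2⟩
      rw [Finset.mem_singleton] at hv'
      subst hv'
      rcases hor with h | h
      · exact Finset.disjoint_singleton_right.1 (h e1 he1) hv1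
      · exact Finset.disjoint_singleton_right.1 (h e2 he2) hv2
  rw [Finset.filter_congr hPiff]
  have hfor : (G1.matchings ×ˢ G2.matchings).filter
      (fun p => (∀ e ∈ p.1, Disjoint e ({u} : Finset α)) ∨
          (∀ e ∈ p.2, Disjoint e ({u} : Finset α)))
      = ((G1.matchings ×ˢ G2.matchings).filter
          (fun p => ∀ e ∈ p.1, Disjoint e ({u} : Finset α)))
        ∪ ((G1.matchings ×ˢ G2.matchings).filter
          (fun p => ∀ e ∈ p.2, Disjoint e ({u} : Finset α))) := Finset.filter_or _ _ _
  rw [hfor]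
  have key := Finset.sum_union_inter
    (s₁ := (G1.matchings ×ˢ G2.matchings).filter
        (fun p => ∀ e ∈ p.1, Disjoint e ({u} : Finset α)))
    (s₂ := (G1.matchings ×ˢ G2.matchings).filter
        (fun p => ∀ e ∈ p.2, Disjoint e ({u} : Finset α)))
    (f := fun (p : Finset (Finset α) × Finset (Finset α)) =>
      (-1:ℝ)^((p.1 ∪ p.2).card) * x^(T.verts.card - r*(p.1 ∪ p.2).card))
  have hA : (G1.matchings ×ˢ G2.matchings).filter
      (fun p => ∀ e ∈ p.1, Disjoint e ({u} : Finset α))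
      = (G1.removeVerts {u}).matchings ×ˢ G2.matchings := by
    rw [matchings_removeVerts]
    ext p
    simp only [Finset.mem_filter, Finset.mem_product]
    tauto
  have hB : (G1.matchings ×ˢ G2.matchings).filter
      (fun p => ∀ e ∈ p.2, Disjoint e ({u} : Finset α))
      = G1.matchings ×ˢ (G2.removeVerts {u}).matchings := by
    rw [matchings_removeVerts]
    ext p
    simp only [Finset.mem_filter, Finset.mem_product]
    tauto
  have hAB : ((G1.matchings ×ˢ G2.matchings).filter
        (fun p => ∀ e ∈ p.1, Disjoint e ({u} : Finset α)))
      ∩ ((G1.matchings ×ˢ G2.matchings).filter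
        (fun p => ∀ e ∈ p.2, Disjoint e ({u} : Finset α)))
      = (G1.removeVerts {u}).matchings ×ˢ (G2.removeVerts {u}).matchings := by
    rw [← Finset.filter_and, matchings_removeVerts, matchings_removeVerts]
    ext p
    simp only [Finset.mem_filter, Finset.mem_product]
    tauto
  rw [hAB, hA, hB] at key
  have sub1 : (G1.removeVerts {u}).matchings ⊆ G1.matchings := by
    rw [matchings_removeVerts]; exact Finset.filter_subset _ _
  have sub2 : (G2.removeVerts {u}).matchings ⊆ G2.matchings := by
    rw [matchings_removeVerts]; exact Finset.filter_subset _ _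
  have sumA : ∑ p ∈ (G1.removeVerts {u}).matchings ×ˢ G2.matchings,
        ((-1:ℝ)^((p.1 ∪ p.2).card) * x^(T.verts.card - r*(p.1 ∪ p.2).card))
      = (∑ M ∈ (G1.removeVerts {u}).matchings, (-1:ℝ)^M.card * x^((n1-1) - r*M.card))
        * (∑ M ∈ G2.matchings, (-1:ℝ)^M.card * x^(n2 - r*M.card)) := by
    rw [hnT]
    apply sum_pairs_eq x _ _ (by omega) b1' b2
    intro p hp
    obtain ⟨h1, h2⟩ := Finset.mem_product.1 hp
    exact hdis p ((mem_matchings.1 (sub1 h1)).1) ((mem_matchings.1 h2).1)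
  have sumB : ∑ p ∈ G1.matchings ×ˢ (G2.removeVerts {u}).matchings,
        ((-1:ℝ)^((p.1 ∪ p.2).card) * x^(T.verts.card - r*(p.1 ∪ p.2).card))
      = (∑ M ∈ G1.matchings, (-1:ℝ)^M.card * x^(n1 - r*M.card))
        * (∑ M ∈ (G2.removeVerts {u}).matchings, (-1:ℝ)^M.card * x^((n2-1) - r*M.card)) := by
    rw [hnT]
    apply sum_pairs_eq x _ _ (by omega) b1 b2'
    intro p hp
    obtain ⟨h1, h2⟩ := Finset.mem_product.1 hp
    exact hdis p ((mem_matchings.1 h1).1) ((mem_matchings.1 (sub2 h2)).1)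
  have sumAB : ∑ p ∈ (G1.removeVerts {u}).matchings ×ˢ (G2.removeVerts {u}).matchings,
        ((-1:ℝ)^((p.1 ∪ p.2).card) * x^(T.verts.card - r*(p.1 ∪ p.2).card))
      = x * ((∑ M ∈ (G1.removeVerts {u}).matchings, (-1:ℝ)^M.card * x^((n1-1) - r*M.card))
        * (∑ M ∈ (G2.removeVerts {u}).matchings, (-1:ℝ)^M.card * x^((n2-1) - r*M.card))) := by
    rw [← sum_pairs_eq x _ _ (rfl : (n1-1)+(n2-1) = (n1-1)+(n2-1)) b1' b2' ?_,
      Finset.mul_sum]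
    · apply Finset.sum_congr rfl
      intro p hp
      obtain ⟨h1, h2⟩ := Finset.mem_product.1 hp
      have hdp : Disjoint p.1 p.2 :=
        hdis p ((mem_matchings.1 (sub1 h1)).1) ((mem_matchings.1 (sub2 h2)).1)
      have hb1 := b1' p.1 h1
      have hb2 := b2' p.2 h2
      rw [Finset.card_union_of_disjoint hdp, hnT]
      rw [show n1 + n2 - 1 - r * (p.1.card + p.2.card)
          = ((n1-1) + (n2-1) - r * (p.1.card + p.2.card)) + 1 by
        have : r * (p.1.card + p.2.card) = r * p.1.card + r * p.2.card := by ring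
        omega]
      rw [pow_succ]
      ring
    · intro p hp
      obtain ⟨h1, h2⟩ := Finset.mem_product.1 hp
      exact hdis p ((mem_matchings.1 (sub1 h1)).1) ((mem_matchings.1 (sub2 h2)).1)
  rw [sumA, sumB, sumAB] at key
  rw [hA, hB, hcard1, hcard2, ← hn1, ← hn2]
  linarith [key]

end FinHypergraph
namespace FinHypergraph

variable {α : Type*}

lemma matchPoly_vertex {G : FinHypergraph α} {r : ℕ} (hr : 1 ≤ r)
    (hwf : G.WellFormed) (hun : G.Uniform r) {v : α} (hv : v ∈ G.verts) (x : ℝ) :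
    G.matchPoly r x
      = x * (G.removeVerts {v}).matchPoly r x
        - ∑ e ∈ G.edges.filter (fun e => v ∈ e), (G.removeVerts e).matchPoly r x := by
  classical
  set n := G.verts.card with hn
  have wf' := removeVerts_wellFormed hwf ({v} : Finset α)
  have un' := removeVerts_uniform hun ({v} : Finset α)
  have hcard' : (G.removeVerts {v}).verts.card = n - 1 := by
    rw [removeVerts_card (Finset.singleton_subset_iff.2 hv), Finset.card_singleton]
  have hn1 : 1 ≤ n := Finset.card_pos.2 ⟨v, hv⟩
  rw [matchPoly_eq_sum hr hwf hun x]
  rw [← Finset.sum_filter_add_sum_filter_not G.matchings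
    (fun M => ∀ e ∈ M, Disjoint e ({v} : Finset α))]
  have hfree : G.matchings.filter (fun M => ∀ e ∈ M, Disjoint e ({v} : Finset α))
      = (G.removeVerts {v}).matchings := (matchings_removeVerts G {v}).symm
  have hsum1 : ∑ M ∈ G.matchings.filter (fun M => ∀ e ∈ M, Disjoint e ({v} : Finset α)),
        ((-1:ℝ)^M.card * x^(n - r*M.card))
      = x * (G.removeVerts {v}).matchPoly r x := by
    rw [hfree, matchPoly_eq_sum hr wf' un' x, Finset.mul_sum]
    apply Finset.sum_congr rfl
    intro M hM
    have hb : r * M.card ≤ n - 1 := by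
      have := card_bound wf' un' hM
      rwa [hcard'] at this
    rw [hcard', show n - r*M.card = (n - 1 - r*M.card) + 1 by omega, pow_succ]
    ring
  have hsum2 : ∑ M ∈ G.matchings.filter
        (fun M => ¬ ∀ e ∈ M, Disjoint e ({v} : Finset α)),
        ((-1:ℝ)^M.card * x^(n - r*M.card))
      = - ∑ e ∈ G.edges.filter (fun e => v ∈ e), (G.removeVerts e).matchPoly r x := by
    have hcover : G.matchings.filter (fun M => ¬ ∀ e ∈ M, Disjoint e ({v} : Finset α))
        = (G.edges.filter (fun e => v ∈ e)).biUnion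
            (fun e => G.matchings.filter (fun M => e ∈ M)) := by
      ext M
      simp only [Finset.mem_filter, Finset.mem_biUnion]
      constructor
      · rintro ⟨hM, hnot⟩
        push_neg at hnot
        obtain ⟨e, heM, hed⟩ := hnot
        rw [Finset.disjoint_singleton_right] at hed
        push_neg at hed
        exact ⟨e, ⟨(mem_matchings.1 hM).1 heM, hed⟩, hM, heM⟩
      · rintro ⟨e, ⟨heE, hve⟩, hM, heM⟩
        refine ⟨hM, ?_⟩
        push_neg
        exact ⟨e, heM, by rw [Finset.disjoint_singleton_right]; exact not_not.2 hve⟩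
    rw [hcover, Finset.sum_biUnion]
    · rw [← Finset.sum_neg_distrib]
      apply Finset.sum_congr rfl
      intro e heE'
      obtain ⟨heE, hve⟩ := Finset.mem_filter.1 heE'
      have hecard := hun e heE
      have hesub := hwf e heE
      have wfe := removeVerts_wellFormed hwf e
      have une := removeVerts_uniform hun e
      have hcarde : (G.removeVerts e).verts.card = n - r := by
        rw [removeVerts_card hesub, hecard]
      rw [matchPoly_eq_sum hr wfe une x]
      rw [← Finset.sum_neg_distrib]
      apply Finset.sum_nbij' (i := fun M => M.erase e) (j := fun M => insert e M)
      · intro M hM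
        obtain ⟨hMm, heM⟩ := Finset.mem_filter.1 hM
        obtain ⟨hsub, hmatch⟩ := mem_matchings.1 hMm
        refine mem_matchings.2 ⟨?_, isMatchingSet_subset (Finset.erase_subset _ _) hmatch⟩
        intro f hf
        obtain ⟨hfe, hfM⟩ := Finset.mem_erase.1 hf
        refine Finset.mem_filter.2 ⟨hsub hfM, hmatch f hfM e heM hfe⟩
      · intro M hM
        obtain ⟨hsub, hmatch⟩ := mem_matchings.1 hM
        have hdall : ∀ f ∈ M, Disjoint f e :=
          fun f hf => (Finset.mem_filter.1 (hsub hf)).2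
        have heM : e ∉ M := by
          intro hcon
          have := hdall e hcon
          rw [disjoint_self, Finset.bot_eq_empty] at this
          rw [this] at hecard
          simp at hecard
          omega
        refine Finset.mem_filter.2 ⟨mem_matchings.2 ⟨?_, ?_⟩, Finset.mem_insert_self e M⟩
        · intro f hf
          rcases Finset.mem_insert.1 hf with rfl | hfM
          · exact heE
          · exact (Finset.mem_filter.1 (hsub hfM)).1
        · intro f hf g hg hfg
          rcases Finset.mem_insert.1 hf with rfl | hfM <;>
            rcases Finset.mem_insert.1 hg with rfl | hgM
          · exact absurd rfl hfg
          · exact (hdall g hgM).symm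
          · exact hdall f hfM
          · exact hmatch f hfM g hgM hfg
      · intro M hM
        obtain ⟨_, heM⟩ := Finset.mem_filter.1 hM
        exact Finset.insert_erase heM
      · intro M hM
        obtain ⟨hsub, _⟩ := mem_matchings.1 hM
        apply Finset.erase_insert
        intro hcon
        have := (Finset.mem_filter.1 (hsub hcon)).2
        rw [disjoint_self, Finset.bot_eq_empty] at this
        rw [this] at hecard
        simp at hecard
        omega
      · intro M hM
        obtain ⟨hMm, heM⟩ := Finset.mem_filter.1 hM
        have hb : r * M.card ≤ n := card_bound hwf hun hMm
        have hMcard : 1 ≤ M.card := Finset.card_pos.2 ⟨e, heM⟩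
        have hce : (M.erase e).card = M.card - 1 := Finset.card_erase_of_mem heM
        obtain ⟨m', hm'⟩ : ∃ m', M.card = m' + 1 := ⟨M.card - 1, by omega⟩
        rw [hcarde, hce, hm']
        rw [show m' + 1 - 1 = m' by omega,
          show n - r * (m' + 1) = n - r - r * m' by
            have : r * (m' + 1) = r * m' + r := by ring
            omega, pow_succ]
        ring
    · -- pairwise disjointness of the biUnion pieces
      intro e1 he1 e2 he2 hne
      simp only [Function.onFun]
      rw [Finset.disjoint_left]
      intro M hM1 hM2
      obtain ⟨hMm, heM1⟩ := Finset.mem_filter.1 hM1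
      obtain ⟨_, heM2⟩ := Finset.mem_filter.1 hM2
      obtain ⟨_, hmatch⟩ := mem_matchings.1 hMm
      have hd := hmatch e1 heM1 e2 heM2 hne
      obtain ⟨he1E, hv1⟩ := Finset.mem_filter.1 he1
      obtain ⟨he2E, hv2⟩ := Finset.mem_filter.1 he2
      exact Finset.disjoint_left.1 hd hv1 hv2
  rw [hsum1, hsum2]
  ring

end FinHypergraph
namespace FinHypergraph

variable {α : Type*}

lemma mem_image_inj {w : ℕ → α} {N : ℕ} (hw : Set.InjOn w (Set.Iic N))
    {s : Finset ℕ} (hs : ∀ a ∈ s, a ≤ N) {t : ℕ} (ht : t ≤ N) :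
    w t ∈ s.image w ↔ t ∈ s := by
  constructor
  · intro h
    obtain ⟨a, ha, haa⟩ := Finset.mem_image.1 h
    rwa [← hw (Set.mem_Iic.2 (hs a ha)) (Set.mem_Iic.2 ht) haa]
  · intro h
    exact Finset.mem_image_of_mem w h

lemma disjoint_image_of {w : ℕ → α} {N : ℕ} (hw : Set.InjOn w (Set.Iic N))
    {s t : Finset ℕ} (hs : ∀ a ∈ s, a ≤ N) (ht : ∀ a ∈ t, a ≤ N)
    (h : Disjoint s t) : Disjoint (s.image w) (t.image w) := by
  rw [Finset.disjoint_left]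
  rintro y hy hy'
  obtain ⟨a, ha, rfl⟩ := Finset.mem_image.1 hy
  obtain ⟨b, hb, hba⟩ := Finset.mem_image.1 hy'
  have hab : b = a := hw (Set.mem_Iic.2 (ht b hb)) (Set.mem_Iic.2 (hs a ha)) hba
  exact Finset.disjoint_left.1 h ha (hab ▸ hb)

lemma Icc_subset_path {r m i : ℕ} (hi : i < m) :
    ∀ t ∈ Finset.Icc (i*(r-1)) ((i+1)*(r-1)), t ≤ m*(r-1) := by
  intro t ht
  rw [Finset.mem_Icc] at ht
  have h1 : (i+1)*(r-1) ≤ m*(r-1) := Nat.mul_le_mul (by omega) (le_refl (r-1))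
  omega

lemma pathEdge_card {r : ℕ} (hr : 1 ≤ r) {m : ℕ} {w : ℕ → α}
    (hw : Set.InjOn w (Set.Iic (m*(r-1)))) {i : ℕ} (hi : i < m) :
    ((Finset.Icc (i*(r-1)) ((i+1)*(r-1))).image w).card = r := by
  rw [Finset.card_image_of_injOn (hw.mono (fun t ht => Set.mem_Iic.2
    (Icc_subset_path hi t ht)))]
  rw [Nat.card_Icc]
  have h2 : (i+1)*(r-1) = i*(r-1) + (r-1) := by ring
  omega

lemma loosePath_wellFormed {r m : ℕ} {P : FinHypergraph α} (h : IsLoosePath r m P) :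
    P.WellFormed := by
  obtain ⟨w, hw, hv, he⟩ := h
  intro e heP
  rw [he, loosePathEdges] at heP
  obtain ⟨i, hi, rfl⟩ := Finset.mem_image.1 heP
  rw [Finset.mem_range] at hi
  rw [hv]
  apply Finset.image_subset_image
  intro t ht
  rw [Finset.mem_Icc]
  exact ⟨Nat.zero_le t, Icc_subset_path hi t ht⟩

lemma loosePath_uniform {r m : ℕ} (hr : 1 ≤ r) {P : FinHypergraph α}
    (h : IsLoosePath r m P) : P.Uniform r := by
  obtain ⟨w, hw, hv, he⟩ := h
  intro e heP
  rw [he, loosePathEdges] at heP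
  obtain ⟨i, hi, rfl⟩ := Finset.mem_image.1 heP
  rw [Finset.mem_range] at hi
  exact pathEdge_card hr hw hi

lemma loosePath_verts_card {r m : ℕ} {P : FinHypergraph α} (h : IsLoosePath r m P) :
    P.verts.card = m*(r-1) + 1 := by
  obtain ⟨w, hw, hv, he⟩ := h
  rw [hv, Finset.card_image_of_injOn (hw.mono (fun t ht => by
    rw [Finset.coe_Icc] at ht
    exact Set.mem_Iic.2 ht.2))]
  rw [Nat.card_Icc]
  omega

lemma pathEdge_disjoint_far {r : ℕ} (hr : 2 ≤ r) {m : ℕ} {w : ℕ → α}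
    (hw : Set.InjOn w (Set.Iic (m*(r-1)))) {i j : ℕ} (hi : i < m) (hj : j < m)
    (hij : i + 2 ≤ j ∨ j + 2 ≤ i) :
    Disjoint ((Finset.Icc (i*(r-1)) ((i+1)*(r-1))).image w)
             ((Finset.Icc (j*(r-1)) ((j+1)*(r-1))).image w) := by
  apply disjoint_image_of hw (Icc_subset_path hi) (Icc_subset_path hj)
  rw [Finset.disjoint_left]
  intro t h1 h2
  rw [Finset.mem_Icc] at h1 h2
  rcases hij with h | h
  · have k1 : (i+2)*(r-1) ≤ j*(r-1) := Nat.mul_le_mul h (le_refl (r-1))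
    have k2 : (i+2)*(r-1) = (i+1)*(r-1) + (r-1) := by ring
    omega
  · have k1 : (j+2)*(r-1) ≤ i*(r-1) := Nat.mul_le_mul h (le_refl (r-1))
    have k2 : (j+2)*(r-1) = (j+1)*(r-1) + (r-1) := by ring
    omega

lemma pathEdge_not_disjoint {r : ℕ} (hr : 2 ≤ r) {w : ℕ → α}
    {i j : ℕ} (hij : ¬(i + 2 ≤ j ∨ j + 2 ≤ i)) :
    ¬ Disjoint ((Finset.Icc (i*(r-1)) ((i+1)*(r-1))).image w)
               ((Finset.Icc (j*(r-1)) ((j+1)*(r-1))).image w) := by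
  rw [Finset.not_disjoint_iff]
  have hle : ∀ a b : ℕ, a ≤ b → a*(r-1) ≤ b*(r-1) :=
    fun a b h => Nat.mul_le_mul h (le_refl (r-1))
  rcases show i = j ∨ i + 1 = j ∨ j + 1 = i by omega with h | h | h
  · subst h
    exact ⟨w (i*(r-1)), Finset.mem_image_of_mem w (Finset.mem_Icc.2
      ⟨le_refl _, hle i (i+1) (by omega)⟩),
      Finset.mem_image_of_mem w (Finset.mem_Icc.2 ⟨le_refl _, hle i (i+1) (by omega)⟩)⟩
  · subst h
    exact ⟨w ((i+1)*(r-1)), Finset.mem_image_of_mem w (Finset.mem_Icc.2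
      ⟨hle i (i+1) (by omega), le_refl _⟩),
      Finset.mem_image_of_mem w (Finset.mem_Icc.2 ⟨le_refl _, hle (i+1) (i+2) (by omega)⟩)⟩
  · subst h
    exact ⟨w ((j+1)*(r-1)), Finset.mem_image_of_mem w (Finset.mem_Icc.2
      ⟨le_refl _, hle (j+1) (j+2) (by omega)⟩),
      Finset.mem_image_of_mem w (Finset.mem_Icc.2 ⟨hle j (j+1) (by omega), le_refl _⟩)⟩

lemma pathEdge_inj {r : ℕ} (hr : 2 ≤ r) {m : ℕ} {w : ℕ → α}
    (hw : Set.InjOn w (Set.Iic (m*(r-1)))) {i j : ℕ} (hi : i < m) (hj : j < m)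
    (h : (Finset.Icc (i*(r-1)) ((i+1)*(r-1))).image w
        = (Finset.Icc (j*(r-1)) ((j+1)*(r-1))).image w) : i = j := by
  have h1 : i*(r-1) ∈ Finset.Icc (j*(r-1)) ((j+1)*(r-1)) := by
    rw [← mem_image_inj hw (Icc_subset_path hj) (Icc_subset_path hi _
      (Finset.mem_Icc.2 ⟨le_refl _, Nat.mul_le_mul (le_refl i) (le_refl (r-1)) |>.trans
        (Nat.mul_le_mul (by omega : i ≤ i+1) (le_refl (r-1)))⟩)), ← h]
    exact Finset.mem_image_of_mem w (Finset.mem_Icc.2 ⟨le_refl _,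
      Nat.mul_le_mul (by omega : i ≤ i+1) (le_refl (r-1))⟩)
  have h2 : j*(r-1) ∈ Finset.Icc (i*(r-1)) ((i+1)*(r-1)) := by
    rw [← mem_image_inj hw (Icc_subset_path hi) (Icc_subset_path hj _
      (Finset.mem_Icc.2 ⟨le_refl _, Nat.mul_le_mul (by omega : j ≤ j+1) (le_refl (r-1))⟩)), h]
    exact Finset.mem_image_of_mem w (Finset.mem_Icc.2 ⟨le_refl _,
      Nat.mul_le_mul (by omega : j ≤ j+1) (le_refl (r-1))⟩)
  rw [Finset.mem_Icc] at h1 h2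
  have : i*(r-1) = j*(r-1) := by omega
  have hr1 : 0 < r - 1 := by omega
  exact Nat.eq_of_mul_eq_mul_right hr1 this

lemma matchCount_loosePath {r m : ℕ} (hr : 2 ≤ r) {P : FinHypergraph α}
    (hP : IsLoosePath r m P) (k : ℕ) :
    P.matchCount k
      = ((Finset.range m).powerset.filter
          (fun K => K.card = k ∧ ∀ i ∈ K, ∀ j ∈ K, i ≠ j → (i + 2 ≤ j ∨ j + 2 ≤ i))).card := by
  classical
  obtain ⟨w, hw, hv, he⟩ := hP
  set E : ℕ → Finset α := fun i => (Finset.Icc (i*(r-1)) ((i+1)*(r-1))).image w with hE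
  have heE : P.edges = (Finset.range m).image E := he
  rw [matchCount_eq]
  symm
  apply Finset.card_bij (i := fun K _ => K.image E)
  · -- maps into
    intro K hK
    obtain ⟨hKsub', hcard, hindep⟩ :
        K ⊆ Finset.range m ∧ K.card = k ∧
          ∀ i ∈ K, ∀ j ∈ K, i ≠ j → (i + 2 ≤ j ∨ j + 2 ≤ i) := by
      obtain ⟨h1, h2, h3⟩ := Finset.mem_filter.1 hK
      exact ⟨Finset.mem_powerset.1 h1, h2, h3⟩
    have hKsub : ∀ i ∈ K, i < m := fun i hi => Finset.mem_range.1 (hKsub' hi)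
    refine Finset.mem_filter.2 ⟨mem_matchings.2 ⟨?_, ?_⟩, ?_⟩
    · rw [heE]
      exact Finset.image_subset_image hKsub'
    · intro e hek f hfk hef
      obtain ⟨i, hiK, rfl⟩ := Finset.mem_image.1 hek
      obtain ⟨j, hjK, rfl⟩ := Finset.mem_image.1 hfk
      have hij : i ≠ j := fun hcon => hef (by rw [hcon])
      exact pathEdge_disjoint_far hr hw (hKsub i hiK) (hKsub j hjK) (hindep i hiK j hjK hij)
    · rw [Finset.card_image_of_injOn, hcard]
      intro i hiK j hjK hij
      exact pathEdge_inj hr hw (hKsub i (by simpa using hiK)) (hKsub j (by simpa using hjK)) hij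
  · -- injective
    intro K1 hK1 K2 hK2 himg
    have hs1 : ∀ i ∈ K1, i < m := fun i hi =>
      Finset.mem_range.1 (Finset.mem_powerset.1 (Finset.mem_filter.1 hK1).1 hi)
    have hs2 : ∀ i ∈ K2, i < m := fun i hi =>
      Finset.mem_range.1 (Finset.mem_powerset.1 (Finset.mem_filter.1 hK2).1 hi)
    ext i
    constructor
    · intro hi
      have : E i ∈ K2.image E := himg ▸ Finset.mem_image_of_mem E hi
      obtain ⟨j, hj, hij⟩ := Finset.mem_image.1 this
      rwa [pathEdge_inj hr hw (hs2 j hj) (hs1 i hi) hij] at hj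
    · intro hi
      have : E i ∈ K1.image E := himg ▸ Finset.mem_image_of_mem E hi
      obtain ⟨j, hj, hij⟩ := Finset.mem_image.1 this
      rwa [pathEdge_inj hr hw (hs1 j hj) (hs2 i hi) hij] at hj
  · -- surjective
    intro M hM
    obtain ⟨hMm, hMcard⟩ := Finset.mem_filter.1 hM
    obtain ⟨hMsub, hmatch⟩ := mem_matchings.1 hMm
    refine ⟨(Finset.range m).filter (fun i => E i ∈ M), ?_, ?_⟩
    · have himg : ((Finset.range m).filter (fun i => E i ∈ M)).image E = M := by
        apply Finset.Subset.antisymm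
        · intro e hek
          obtain ⟨i, hiK, rfl⟩ := Finset.mem_image.1 hek
          exact (Finset.mem_filter.1 hiK).2
        · intro e heM
          have : e ∈ (Finset.range m).image E := heE ▸ hMsub heM
          obtain ⟨i, hi, rfl⟩ := Finset.mem_image.1 this
          exact Finset.mem_image_of_mem E (Finset.mem_filter.2 ⟨hi, heM⟩)
      refine Finset.mem_filter.2 ⟨Finset.mem_powerset.2 (Finset.filter_subset _ _), ?_, ?_⟩
      · rw [← hMcard]
        have hcc : (((Finset.range m).filter (fun i => E i ∈ M)).image E).card
            = ((Finset.range m).filter (fun i => E i ∈ M)).card := by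
          apply Finset.card_image_of_injOn
          intro i hiK j hjK hij
          have hi' : i < m := by
            simp only [Finset.coe_filter, Set.mem_setOf_eq, Finset.mem_range] at hiK
            exact hiK.1
          have hj' : j < m := by
            simp only [Finset.coe_filter, Set.mem_setOf_eq, Finset.mem_range] at hjK
            exact hjK.1
          exact pathEdge_inj hr hw hi' hj' hij
        rw [← hcc, himg]
      · intro i hiK j hjK hij
        obtain ⟨hi, hiM⟩ := Finset.mem_filter.1 hiK
        obtain ⟨hj, hjM⟩ := Finset.mem_filter.1 hjK
        by_contra hcon
        have hEij : E i ≠ E j := fun hcon2 =>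
          hij (pathEdge_inj hr hw (Finset.mem_range.1 hi) (Finset.mem_range.1 hj) hcon2)
        exact pathEdge_not_disjoint hr hcon (hmatch (E i) hiM (E j) hjM hEij)
    · -- image equality (again)
      apply Finset.Subset.antisymm
      · intro e hek
        obtain ⟨i, hiK, rfl⟩ := Finset.mem_image.1 hek
        exact (Finset.mem_filter.1 hiK).2
      · intro e heM
        have : e ∈ (Finset.range m).image E := heE ▸ hMsub heM
        obtain ⟨i, hi, rfl⟩ := Finset.mem_image.1 this
        exact Finset.mem_image_of_mem E (Finset.mem_filter.2 ⟨hi, heM⟩)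

lemma matchPoly_loosePath_congr {r m : ℕ} (hr : 2 ≤ r) {P Q : FinHypergraph α}
    (hP : IsLoosePath r m P) (hQ : IsLoosePath r m Q) (x : ℝ) :
    P.matchPoly r x = Q.matchPoly r x := by
  rw [matchPoly, matchPoly, loosePath_verts_card hP, loosePath_verts_card hQ]
  apply Finset.sum_congr rfl
  intro k _
  rw [matchCount_loosePath hr hP, matchCount_loosePath hr hQ]

end FinHypergraph
namespace FinHypergraph

variable {α : Type*}

lemma matchPoly_loosePath_removeCore {r d c i0 : ℕ} (hr : 3 ≤ r) {w : ℕ → α}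
    (hw : Set.InjOn w (Set.Iic (d*(r-1)))) (hi0 : i0 < d)
    (hc1 : i0*(r-1) < c) (hc2 : c < (i0+1)*(r-1))
    {P1 P2 : FinHypergraph α} (hP1 : IsLoosePath r (d - 1 - i0) P1)
    (hP2 : IsLoosePath r i0 P2) (x : ℝ) :
    ((⟨(Finset.Icc 0 (d*(r-1))).image w, loosePathEdges r d w⟩ : FinHypergraph α).removeVerts
        {w c}).matchPoly r x
      = x^(r-3) * (P1.matchPoly r x * P2.matchPoly r x) := by
  classical
  have hr1 : 1 ≤ r := by omega
  have hr2 : 2 ≤ r := by omega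
  have hbab : (i0+1)*(r-1) = i0*(r-1) + (r-1) := by ring
  have hbN : (i0+1)*(r-1) ≤ d*(r-1) := Nat.mul_le_mul (by omega) (le_refl (r-1))
  have hcN : c ≤ d*(r-1) := by omega
  set m2 := d - 1 - i0 with hm2def
  have hm2N : m2*(r-1) + (i0+1)*(r-1) = d*(r-1) := by
    rw [show m2*(r-1) + (i0+1)*(r-1) = (m2+(i0+1))*(r-1) by ring,
      show m2 + (i0+1) = d by omega]
  set w2 : ℕ → α := fun t => w (t + (i0+1)*(r-1)) with hw2def
  have hw2 : Set.InjOn w2 (Set.Iic (m2*(r-1))) := by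
    intro t ht t' ht' h
    rw [Set.mem_Iic] at ht ht'
    have := hw (Set.mem_Iic.2 (by omega : t + (i0+1)*(r-1) ≤ d*(r-1)))
      (Set.mem_Iic.2 (by omega : t' + (i0+1)*(r-1) ≤ d*(r-1))) h
    omega
  set gL : FinHypergraph α :=
    ⟨(Finset.Icc 0 (i0*(r-1))).image w, loosePathEdges r i0 w⟩ with hgLdef
  set gI : FinHypergraph α :=
    ⟨(Finset.Ioo (i0*(r-1)) ((i0+1)*(r-1))).image w \ {w c}, ∅⟩ with hgIdef
  set gR : FinHypergraph α :=
    ⟨(Finset.Icc 0 (m2*(r-1))).image w2, loosePathEdges r m2 w2⟩ with hgRdef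
  have hgL : IsLoosePath r i0 gL :=
    ⟨w, hw.mono (fun t ht => by
      rw [Set.mem_Iic] at ht ⊢
      exact le_trans ht (le_trans (Nat.le_of_lt (by omega)) hbN)), rfl, rfl⟩
  have hgR : IsLoosePath r m2 gR := ⟨w2, hw2, rfl, rfl⟩
  have hgRverts : gR.verts = (Finset.Icc ((i0+1)*(r-1)) (d*(r-1))).image w := by
    show (Finset.Icc 0 (m2*(r-1))).image w2 = _
    rw [hw2def]
    rw [show (fun t => w (t + (i0+1)*(r-1))) = w ∘ (· + (i0+1)*(r-1)) from rfl,
      ← Finset.image_image, Finset.image_add_right_Icc, Nat.zero_add, hm2N]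
  -- membership of w c in pieces
  have hwcL : w c ∉ (Finset.Icc 0 (i0*(r-1))).image w := by
    rw [mem_image_inj hw (fun t ht => by
      rw [Finset.mem_Icc] at ht; omega) hcN]
    rw [Finset.mem_Icc]
    omega
  have hwcR : w c ∉ (Finset.Icc ((i0+1)*(r-1)) (d*(r-1))).image w := by
    rw [mem_image_inj hw (fun t ht => by
      rw [Finset.mem_Icc] at ht; omega) hcN]
    rw [Finset.mem_Icc]
    omega
  have hwcI : w c ∈ (Finset.Ioo (i0*(r-1)) ((i0+1)*(r-1))).image w :=
    Finset.mem_image_of_mem w (Finset.mem_Ioo.2 ⟨hc1, hc2⟩)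
  -- vertex set equation
  have hVerts : (Finset.Icc 0 (d*(r-1))).image w \ {w c}
      = gL.verts ∪ (gI.verts ∪ gR.verts) := by
    rw [hgRverts]
    show _ = (Finset.Icc 0 (i0*(r-1))).image w
      ∪ (((Finset.Ioo (i0*(r-1)) ((i0+1)*(r-1))).image w \ {w c})
          ∪ (Finset.Icc ((i0+1)*(r-1)) (d*(r-1))).image w)
    have hsplit : (Finset.Icc 0 (d*(r-1)))
        = Finset.Icc 0 (i0*(r-1)) ∪ Finset.Ioo (i0*(r-1)) ((i0+1)*(r-1))
          ∪ Finset.Icc ((i0+1)*(r-1)) (d*(r-1)) := by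
      ext t
      simp only [Finset.mem_union, Finset.mem_Icc, Finset.mem_Ioo]
      omega
    rw [hsplit, Finset.image_union, Finset.image_union]
    ext y
    simp only [Finset.mem_sdiff, Finset.mem_union, Finset.mem_singleton]
    constructor
    · rintro ⟨(h | h) | h, hne⟩
      · exact Or.inl h
      · exact Or.inr (Or.inl ⟨h, hne⟩)
      · exact Or.inr (Or.inr h)
    · rintro (h | ⟨h, hne⟩ | h)
      · exact ⟨Or.inl (Or.inl h), fun hcon => hwcL (hcon ▸ h)⟩
      · exact ⟨Or.inl (Or.inr h), hne⟩
      · exact ⟨Or.inr h, fun hcon => hwcR (hcon ▸ h)⟩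
  -- edge set equation
  have hEdges : (loosePathEdges r d w).filter (fun e => Disjoint e ({w c} : Finset α))
      = loosePathEdges r i0 w ∪ loosePathEdges r m2 w2 := by
    simp only [loosePathEdges]
    rw [Finset.filter_image]
    have hpred : (Finset.range d).filter
        (fun i => Disjoint ((Finset.Icc (i*(r-1)) ((i+1)*(r-1))).image w) ({w c} : Finset α))
        = (Finset.range d).filter (fun i => i ≠ i0) := by
      apply Finset.filter_congr
      intro i hi
      rw [Finset.mem_range] at hi
      rw [Finset.disjoint_singleton_right]
      rw [mem_image_inj hw (Icc_subset_path hi) hcN, Finset.mem_Icc]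
      constructor
      · intro h hcon
        subst hcon
        exact h ⟨by omega, by omega⟩
      · intro hne hcon
        rcases Nat.lt_or_ge i i0 with h | h
        · have : (i+1)*(r-1) ≤ i0*(r-1) := Nat.mul_le_mul (by omega) (le_refl (r-1))
          omega
        · have hgt : i0 < i := by omega
          have : (i0+1)*(r-1) ≤ i*(r-1) := Nat.mul_le_mul (by omega) (le_refl (r-1))
          omega
    rw [hpred]
    have hidx : (Finset.range d).filter (fun i => i ≠ i0)
        = Finset.range i0 ∪ (Finset.range m2).image (fun t => t + (i0+1)) := by
      ext i
      simp only [Finset.mem_filter, Finset.mem_range, Finset.mem_union, Finset.mem_image]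
      constructor
      · rintro ⟨hi, hne⟩
        rcases Nat.lt_or_ge i i0 with h | h
        · exact Or.inl h
        · exact Or.inr ⟨i - (i0+1), by omega, by omega⟩
      · rintro (h | ⟨t, ht, rfl⟩)
        · exact ⟨by omega, by omega⟩
        · exact ⟨by omega, by omega⟩
    have hfun : ∀ t ∈ Finset.range m2,
        (Finset.Icc ((t+(i0+1))*(r-1)) ((t+(i0+1)+1)*(r-1))).image w
        = (Finset.Icc (t*(r-1)) ((t+1)*(r-1))).image w2 := by
      intro t ht
      rw [hw2def, show (fun q => w (q + (i0+1)*(r-1))) = w ∘ (· + (i0+1)*(r-1)) from rfl,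
        ← Finset.image_image, Finset.image_add_right_Icc,
        show t*(r-1) + (i0+1)*(r-1) = (t+(i0+1))*(r-1) by ring,
        show (t+1)*(r-1) + (i0+1)*(r-1) = (t+(i0+1)+1)*(r-1) by ring]
    rw [hidx, Finset.image_union, Finset.image_image]
    congr 1
    apply Finset.image_congr
    intro t ht
    exact hfun t (by simpa using ht)
  -- wellformedness
  have wfgL : gL.WellFormed := loosePath_wellFormed hgL
  have ungL : gL.Uniform r := loosePath_uniform hr1 hgL
  have wfgR : gR.WellFormed := loosePath_wellFormed hgR
  have ungR : gR.Uniform r := loosePath_uniform hr1 hgR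
  set gRest : FinHypergraph α := ⟨gI.verts ∪ gR.verts, gR.edges⟩ with hgRestdef
  have wfgRest : gRest.WellFormed := fun e he =>
    (wfgR e he).trans Finset.subset_union_right
  have ungRest : gRest.Uniform r := fun e he => ungR e he
  -- disjointness facts
  have hdLI : Disjoint gL.verts ((Finset.Ioo (i0*(r-1)) ((i0+1)*(r-1))).image w) := by
    apply disjoint_image_of hw (fun t ht => by rw [Finset.mem_Icc] at ht; omega)
      (fun t ht => by rw [Finset.mem_Ioo] at ht; omega)
    rw [Finset.disjoint_left]
    intro t h1 h2
    rw [Finset.mem_Icc] at h1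
    rw [Finset.mem_Ioo] at h2
    omega
  have hdLR : Disjoint gL.verts ((Finset.Icc ((i0+1)*(r-1)) (d*(r-1))).image w) := by
    apply disjoint_image_of hw (fun t ht => by rw [Finset.mem_Icc] at ht; omega)
      (fun t ht => by rw [Finset.mem_Icc] at ht; omega)
    rw [Finset.disjoint_left]
    intro t h1 h2
    rw [Finset.mem_Icc] at h1 h2
    omega
  have hdIR : Disjoint ((Finset.Ioo (i0*(r-1)) ((i0+1)*(r-1))).image w)
      ((Finset.Icc ((i0+1)*(r-1)) (d*(r-1))).image w) := by
    apply disjoint_image_of hw (fun t ht => by rw [Finset.mem_Ioo] at ht; omega)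
      (fun t ht => by rw [Finset.mem_Icc] at ht; omega)
    rw [Finset.disjoint_left]
    intro t h1 h2
    rw [Finset.mem_Ioo] at h1
    rw [Finset.mem_Icc] at h2
    omega
  have step1 : ((⟨(Finset.Icc 0 (d*(r-1))).image w, loosePathEdges r d w⟩ :
        FinHypergraph α).removeVerts {w c}).matchPoly r x
      = gL.matchPoly r x * gRest.matchPoly r x := by
    apply matchPoly_disjUnion hr1 wfgL ungL wfgRest ungRest
    · show Disjoint gL.verts (gI.verts ∪ gR.verts)
      rw [Finset.disjoint_union_right, hgRverts]
      exact ⟨Finset.disjoint_of_subset_right (Finset.sdiff_subset) hdLI, hdLR⟩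
    · exact hVerts
    · show (loosePathEdges r d w).filter (fun e => Disjoint e ({w c} : Finset α))
        = gL.edges ∪ gRest.edges
      exact hEdges
  have step2 : gRest.matchPoly r x = gI.matchPoly r x * gR.matchPoly r x := by
    apply matchPoly_disjUnion hr1 (fun e he => absurd he (Finset.notMem_empty e))
      (fun e he => absurd he (Finset.notMem_empty e)) wfgR ungR
    · show Disjoint gI.verts gR.verts
      rw [hgRverts]
      exact Finset.disjoint_of_subset_left (Finset.sdiff_subset) hdIR
    · rfl
    · show gR.edges = ∅ ∪ gR.edges
      rw [Finset.empty_union]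
  have step3 : gI.matchPoly r x = x^(r-3) := by
    rw [hgIdef]
    rw [matchPoly_edgeless]
    congr 1
    rw [Finset.card_sdiff_of_subset (Finset.singleton_subset_iff.2 hwcI), Finset.card_singleton]
    rw [Finset.card_image_of_injOn (hw.mono (fun t ht => by
      rw [Finset.coe_Ioo] at ht
      rw [Set.mem_Iic]
      have := ht.2
      simp only [Set.mem_Ioo] at *
      omega))]
    rw [Nat.card_Ioo]
    omega
  rw [step1, step2, step3,
    matchPoly_loosePath_congr hr2 hgR hP1 x,
    matchPoly_loosePath_congr hr2 hgL hP2 x]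
  ring

end FinHypergraph


/-- For `r ≥ 3`, `d ≥ 3`, an `r`-uniform supertree `H` with a vertex
`u`, and `j = ⌈d/2⌉`, the hypergraph `P_d^r(e_j,u)H` obtained by identifying a core
(non-joint) vertex of the edge `e_j` of the loose path `P_d^r` with `u` satisfies
`φ(P_d^r(e_j,u)H, x) = φ(P_d^r,x)·φ(H−u,x)
  − x^(r−3)·φ(P_{⌊d/2⌋}^r,x)·φ(P_{⌈d/2⌉−1}^r,x)·Σ_{e ∈ E_u(H)} φ(H−V(e),x)`. -/
theorem matchPoly_path_core_identify {α : Type*} (r d : ℕ) (hr : 3 ≤ r) (hd : 3 ≤ d)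
    (H : FinHypergraph α) (hH : H.IsSupertree r) (u : α) (hu : u ∈ H.verts)
    (c : ℕ) (hc1 : ((d + 1) / 2 - 1) * (r - 1) < c) (hc2 : c < ((d + 1) / 2) * (r - 1))
    (T Pd P1 P2 : FinHypergraph α)
    (hT : IsPathIdentify r d c H u T)
    (hPd : IsLoosePath r d Pd)
    (hP1 : IsLoosePath r (d / 2) P1) (hP2 : IsLoosePath r ((d + 1) / 2 - 1) P2) :
    ∀ x : ℝ, T.matchPoly r x
      = Pd.matchPoly r x * (H.removeVerts {u}).matchPoly r x
        - x ^ (r - 3) * P1.matchPoly r x * P2.matchPoly r x *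
            ∑ e ∈ H.edges.filter (fun e => u ∈ e), (H.removeVerts e).matchPoly r x := by
  classical
  intro x
  have hr1 : 1 ≤ r := by omega
  have hr2 : 2 ≤ r := by omega
  obtain ⟨hwf, hun, -, -⟩ := hH
  obtain ⟨w, hw, hwc, hnew, hTv, hTe⟩ := hT
  -- the path edge index containing the core vertex (0-indexed)
  have hi0 : (d + 1) / 2 - 1 < d := by omega
  have hcb : c < ((d + 1) / 2 - 1 + 1) * (r - 1) := by
    rw [show (d + 1) / 2 - 1 + 1 = (d + 1) / 2 by omega]
    exact hc2
  have hcN : c ≤ d * (r - 1) := by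
    have h1 : ((d + 1) / 2 - 1 + 1) * (r - 1) ≤ d * (r - 1) :=
      Nat.mul_le_mul (by omega) (le_refl (r - 1))
    omega
  have hP1' : IsLoosePath r (d - 1 - ((d + 1) / 2 - 1)) P1 := by
    rw [show d - 1 - ((d + 1) / 2 - 1) = d / 2 by omega]
    exact hP1
  -- the embedded copy of the path
  have hP' : IsLoosePath r d
      (⟨(Finset.Icc 0 (d * (r - 1))).image w, loosePathEdges r d w⟩ : FinHypergraph α) :=
    ⟨w, hw, rfl, rfl⟩
  have wfP' := loosePath_wellFormed hP'
  have unP' := loosePath_uniform hr1 hP'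
  have huP : u ∈ (⟨(Finset.Icc 0 (d * (r - 1))).image w,
      loosePathEdges r d w⟩ : FinHypergraph α).verts := by
    rw [← hwc]
    exact Finset.mem_image_of_mem w (Finset.mem_Icc.2 ⟨Nat.zero_le c, hcN⟩)
  have hsep : (⟨(Finset.Icc 0 (d * (r - 1))).image w,
      loosePathEdges r d w⟩ : FinHypergraph α).verts ∩ H.verts ⊆ {u} := by
    intro v hv
    obtain ⟨hv1, hv2⟩ := Finset.mem_inter.1 hv
    obtain ⟨t, ht, rfl⟩ := Finset.mem_image.1 hv1
    rw [Finset.mem_Icc] at ht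
    rcases eq_or_ne t c with rfl | hne
    · rw [hwc]
      exact Finset.mem_singleton_self u
    · exact absurd hv2 (hnew t ht.2 hne)
  have master := matchPoly_one_shared hr2 wfP' unP' hwf hun huP hu hsep
    (by rw [hTv, Finset.union_comm]) (by rw [hTe, Finset.union_comm]) x
  have vertexEq := matchPoly_vertex hr1 hwf hun hu x
  have core := matchPoly_loosePath_removeCore hr hw hi0 hc1 hcb hP1' hP2 x
  rw [hwc] at core
  have pdEq := matchPoly_loosePath_congr hr2 hP' hPd x
  rw [master, core, vertexEq, pdEq]
  ring
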